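/- Let r > 0 and let x, y be vectors in ℝ^d with |x| ≥ r, |y| ≥ r and |x - y| ≤ r. Then for every t ∈ [0,1], |t·x + (1-t)·y| ≥ (√3/2)·r. -/

import Mathlib

/-- If `|x| ≥ r`, `|y| ≥ r` and `|x - y| ≤ r`, then every convex combination
`t•x + (1-t)•y` has norm at least `(√3/2)·r`. -/
theorem convex_combination_norm_lower_bound
    (d : ℕ) (r : ℝ) (hr : 0 < r) (x y : EuclideanSpace ℝ (Fin d))
    (hx : r ≤ ‖x‖) (hy : r ≤ ‖y‖) (hxy : ‖x - y‖ ≤ r) :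
    ∀ t ∈ Set.Icc (0 : ℝ) 1,
      Real.sqrt 3 / 2 * r ≤ ‖t • x + (1 - t) • y‖ := by
  rintro t ⟨ht0, ht1⟩
  have hsub : ‖x - y‖ ^ 2 = ‖x‖ ^ 2 - 2 * inner ℝ x y + ‖y‖ ^ 2 := norm_sub_sq_real x y
  have hadd : ‖t • x + (1 - t) • y‖ ^ 2
      = t ^ 2 * ‖x‖ ^ 2 + 2 * (t * (1 - t)) * inner ℝ x y + (1 - t) ^ 2 * ‖y‖ ^ 2 := by
    have := norm_add_sq_real (t • x) ((1 - t) • y)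
    simp only [norm_smul, real_inner_smul_left, real_inner_smul_right, Real.norm_eq_abs,
      abs_of_nonneg ht0, abs_of_nonneg (by linarith : (0:ℝ) ≤ 1 - t)] at this
    ring_nf at this ⊢
    linarith
  have hq : 3 / 4 * r ^ 2 ≤ ‖t • x + (1 - t) • y‖ ^ 2 := by
    have hxr : r ^ 2 ≤ ‖x‖ ^ 2 := by nlinarith [norm_nonneg x]
    have hyr : r ^ 2 ≤ ‖y‖ ^ 2 := by nlinarith [norm_nonneg y]
    have hxyr : ‖x - y‖ ^ 2 ≤ r ^ 2 := by nlinarith [norm_nonneg (x - y)]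
    nlinarith [sq_nonneg t, sq_nonneg (1 - t), mul_nonneg ht0 (by linarith : (0:ℝ) ≤ 1 - t),
      sq_nonneg (2 * t - 1)]
  have hs : (Real.sqrt 3 / 2 * r) ^ 2 = 3 / 4 * r ^ 2 := by
    rw [mul_pow, div_pow, Real.sq_sqrt (by norm_num : (3:ℝ) ≥ 0)]
    ring
  have h0 : 0 < Real.sqrt 3 / 2 * r := by positivity
  nlinarith [norm_nonneg (t • x + (1 - t) • y)]
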